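/- For each t ∈ ℤ^d with F_t ≠ ∅, let K_t be the number of B_{|t|−1}-equivalence classes of F_t. Suppose that for each t with K_t ≥ 2 one chooses K_t − 1 moves z_{t,1},…,z_{t,K_t−1} with Az_{t,m}⁺ = Az_{t,m}⁻ = t, each having its positive and negative parts in two different B_{|t|−1}-equivalence classes of F_t, such that the graph whose vertices are the B_{|t|−1}-equivalence classes of F_t and whose edges join, for each chosen move, the class containing its positive part to the class containing its negative part, is a tree. Then the union over all t with K_t ≥ 2 of the sets {z_{t,1},…,z_{t,K_t−1}} is a minimal Markov basis. -/

import Mathlib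

set_option linter.unusedSectionVars false


open scoped BigOperators

section Defs

variable {ι κ : Type*} [Fintype ι]

/-- Embed a frequency vector `x ∈ ℕ^ι` into `ℤ^ι`. -/
def natToInt (x : ι → ℕ) : ι → ℤ := fun i => (x i : ℤ)

/-- The fiber of `t`: all frequency vectors `x` with `A x = t`. -/
def fiberOf (A : Matrix κ ι ℤ) (t : κ → ℤ) : Set (ι → ℕ) :=
  {x | A.mulVec (natToInt x) = t}

/-- A move for `A`: an integer vector in the kernel of `A`. -/
def IsMove (A : Matrix κ ι ℤ) (z : ι → ℤ) : Prop := A.mulVec z = 0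

/-- The positive part `z⁺` of an integer vector, as a frequency vector. -/
def posOf (z : ι → ℤ) : ι → ℕ := fun i => (z i).toNat

/-- The negative part `z⁻` of an integer vector, as a frequency vector. -/
def negOf (z : ι → ℤ) : ι → ℕ := fun i => (-z i).toNat

/-- The degree of a move: `deg z = |z⁺|`. -/
def degOf (z : ι → ℤ) : ℕ := ∑ i, posOf z i

/-- One step: add or subtract one move of `B`, staying in `ℕ^ι`. -/
def MStep (B : Set (ι → ℤ)) (x y : ι → ℕ) : Prop :=
  ∃ z ∈ B, natToInt y = natToInt x + z ∨ natToInt y = natToInt x - z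

/-- `y` is accessible from `x` by the moves of `B` (staying nonnegative throughout,
since all intermediate points are frequency vectors). -/
def Accessible (B : Set (ι → ℤ)) : (ι → ℕ) → (ι → ℕ) → Prop :=
  Relation.ReflTransGen (MStep B)

/-- A Markov basis: a finite set of moves such that every fiber forms a single
equivalence class for mutual accessibility. -/
def IsMarkovBasis (A : Matrix κ ι ℤ) (B : Set (ι → ℤ)) : Prop :=
  B.Finite ∧ (∀ z ∈ B, IsMove A z) ∧
    ∀ t : κ → ℤ, ∀ x ∈ fiberOf A t, ∀ y ∈ fiberOf A t, Accessible B x y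

/-- A minimal Markov basis: no proper subset is a Markov basis. -/
def IsMinimalMarkovBasis (A : Matrix κ ι ℤ) (B : Set (ι → ℤ)) : Prop :=
  IsMarkovBasis A B ∧ ∀ B' ⊂ B, ¬ IsMarkovBasis A B'

/-- An indispensable monomial: every Markov basis contains a move whose
positive or negative part is `x`. -/
def IsIndispensableMonomial (A : Matrix κ ι ℤ) (x : ι → ℕ) : Prop :=
  ∀ B : Set (ι → ℤ), IsMarkovBasis A B → ∃ z ∈ B, posOf z = x ∨ negOf z = x

/-- `B_n`: the set of moves of degree at most `n`. -/
def Bmoves (A : Matrix κ ι ℤ) (n : ℕ) : Set (ι → ℤ) :=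
  {z | IsMove A z ∧ degOf z ≤ n}

/-- The sample size `|t|` of a sufficient statistic `t` (well defined on nonempty
fibers under homogeneity). -/
noncomputable def sampleSize (A : Matrix κ ι ℤ) (t : κ → ℤ) : ℕ :=
  sInf {n | ∃ x ∈ fiberOf A t, ∑ i, x i = n}

/-- The `B_{|t|-1}`-equivalence classes of the fiber of `t`. -/
noncomputable def fiberClasses (A : Matrix κ ι ℤ) (t : κ → ℤ) : Set (Set (ι → ℕ)) :=
  {C | ∃ x ∈ fiberOf A t,
    C = {y | y ∈ fiberOf A t ∧ Accessible (Bmoves A (sampleSize A t - 1)) x y}}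

/-- Homogeneity: some rational vector `w` has `w ⬝ aᵢ = 1` for every column `aᵢ`. -/
def IsHomogeneousMatrix [Fintype κ] (A : Matrix κ ι ℤ) : Prop :=
  ∃ w : κ → ℚ, ∀ i : ι, ∑ j, w j * (A j i : ℚ) = 1

end Defs

section Aux1

variable {ι κ : Type*} [Fintype ι] [Fintype κ]
variable {A : Matrix κ ι ℤ} {B : Set (ι → ℤ)} {t : κ → ℤ} {x y : ι → ℕ} {z : ι → ℤ}

lemma natToInt_apply (x : ι → ℕ) (i : ι) : natToInt x i = (x i : ℤ) := rfl

lemma natToInt_inj {x y : ι → ℕ} (h : natToInt x = natToInt y) : x = y := by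
  funext i
  have h2 := congrFun h i
  simpa [natToInt] using h2

lemma natToInt_add (x c : ι → ℕ) : natToInt (x + c) = natToInt x + natToInt c := by
  funext i; simp [natToInt, Pi.add_apply]

lemma mstep_symm (h : MStep B x y) : MStep B y x := by
  obtain ⟨z, hz, h | h⟩ := h
  · exact ⟨z, hz, Or.inr (by rw [h]; ring)⟩
  · exact ⟨z, hz, Or.inl (by rw [h]; ring)⟩

lemma acc_symm (h : Accessible B x y) : Accessible B y x :=
  have : Std.Symm (MStep B) := ⟨fun _ _ => mstep_symm⟩
  (Relation.ReflTransGen.symmetric (r := MStep B)).symm _ _ h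

lemma acc_trans {w : ι → ℕ} (h : Accessible B x y) (h' : Accessible B y w) :
    Accessible B x w := h.trans h'

lemma acc_add (c : ι → ℕ) (h : Accessible B x y) : Accessible B (x + c) (y + c) := by
  induction h with
  | refl => exact Relation.ReflTransGen.refl
  | tail _ hstep ih =>
    refine ih.tail ?_
    obtain ⟨z, hz, h | h⟩ := hstep
    · exact ⟨z, hz, Or.inl (by rw [natToInt_add, natToInt_add, h]; ring)⟩
    · exact ⟨z, hz, Or.inr (by rw [natToInt_add, natToInt_add, h]; ring)⟩

lemma mem_fiber_step (hB : ∀ z ∈ B, IsMove A z) (hx : x ∈ fiberOf A t)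
    (h : MStep B x y) : y ∈ fiberOf A t := by
  obtain ⟨z, hz, h | h⟩ := h <;>
  · simp only [fiberOf, Set.mem_setOf_eq] at hx ⊢
    rw [h]
    first
      | rw [Matrix.mulVec_add, hx, hB z hz, add_zero]
      | rw [Matrix.mulVec_sub, hx, hB z hz, sub_zero]

lemma mem_fiber_of_acc (hB : ∀ z ∈ B, IsMove A z) (hx : x ∈ fiberOf A t)
    (h : Accessible B x y) : y ∈ fiberOf A t := by
  induction h with
  | refl => exact hx
  | tail _ hstep ih => exact mem_fiber_step hB ih hstep

lemma sum_fiber_eq (hA : IsHomogeneousMatrix A) (hx : x ∈ fiberOf A t)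
    (hy : y ∈ fiberOf A t) : ∑ i, x i = ∑ i, y i := by
  obtain ⟨w, hw⟩ := hA
  have key : ∀ u : ι → ℕ, u ∈ fiberOf A t → ((∑ i, u i : ℕ) : ℚ) = ∑ j, w j * (t j : ℚ) := by
    intro u hu
    have ht : ∀ j, (t j : ℚ) = ∑ i, (A j i : ℚ) * (u i : ℚ) := by
      intro j
      have := congrFun hu j
      simp only [Matrix.mulVec, dotProduct, natToInt] at this
      rw [← this]
      push_cast
      rfl
    calc ((∑ i, u i : ℕ) : ℚ) = ∑ i, (u i : ℚ) * (∑ j, w j * (A j i : ℚ)) := by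
          push_cast; simp [hw]
      _ = ∑ j, w j * ∑ i, (A j i : ℚ) * (u i : ℚ) := by
          simp_rw [Finset.mul_sum]
          rw [Finset.sum_comm]
          exact Finset.sum_congr rfl fun j _ => Finset.sum_congr rfl fun i _ => by ring
      _ = ∑ j, w j * (t j : ℚ) := by simp_rw [← ht]
  exact_mod_cast (key x hx).trans (key y hy).symm

lemma sampleSize_eq (hA : IsHomogeneousMatrix A) (hx : x ∈ fiberOf A t) :
    sampleSize A t = ∑ i, x i := by
  have : {n | ∃ x ∈ fiberOf A t, ∑ i, x i = n} = {∑ i, x i} := by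
    ext n
    constructor
    · rintro ⟨y, hy, rfl⟩
      exact (sum_fiber_eq hA hy hx)
    · rintro rfl
      exact ⟨x, hx, rfl⟩
  rw [sampleSize, this, csInf_singleton]

lemma posOf_sub_negOf (z : ι → ℤ) : natToInt (posOf z) - natToInt (negOf z) = z := by
  funext i
  simp only [Pi.sub_apply, natToInt, posOf, negOf]
  omega

lemma pos_neg_same_fiber (hz : IsMove A z) :
    A.mulVec (natToInt (posOf z)) = A.mulVec (natToInt (negOf z)) := by
  have h := posOf_sub_negOf z
  have : A.mulVec (natToInt (posOf z) - natToInt (negOf z)) = 0 := by rw [h]; exact hz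
  rw [Matrix.mulVec_sub] at this
  exact sub_eq_zero.mp this

lemma sum_posOf (z : ι → ℤ) : ∑ i, posOf z i = degOf z := rfl

lemma degOf_eq_sum_negOf (hA : IsHomogeneousMatrix A) (hz : IsMove A z) :
    degOf z = ∑ i, negOf z i := by
  have h := pos_neg_same_fiber (A := A) hz
  have h1 : posOf z ∈ fiberOf A (A.mulVec (natToInt (negOf z))) := h
  have h2 : negOf z ∈ fiberOf A (A.mulVec (natToInt (negOf z))) := rfl
  exact sum_fiber_eq hA h1 h2

lemma posOf_neg (z : ι → ℤ) : posOf (-z) = negOf z := rfl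

lemma negOf_neg (z : ι → ℤ) : negOf (-z) = posOf z := by
  funext i; simp [negOf, posOf]

lemma degOf_neg (hA : IsHomogeneousMatrix A) (hz : IsMove A z) : degOf (-z) = degOf z := by
  exact (degOf_eq_sum_negOf hA hz).symm

lemma neg_mem_Bmoves (hA : IsHomogeneousMatrix A) {n : ℕ} (hz : z ∈ Bmoves A n) :
    -z ∈ Bmoves A n := by
  obtain ⟨h1, h2⟩ := hz
  refine ⟨?_, ?_⟩
  · show A.mulVec (-z) = 0
    rw [Matrix.mulVec_neg, h1, neg_zero]
  · rw [degOf_neg hA h1]; exact h2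

lemma fiber_finite (hA : IsHomogeneousMatrix A) (t : κ → ℤ) : (fiberOf A t).Finite := by
  rcases Set.eq_empty_or_nonempty (fiberOf A t) with h | ⟨x0, hx0⟩
  · rw [h]; exact Set.finite_empty
  · set n := ∑ i, x0 i with hn
    apply Set.Finite.subset (Set.Finite.pi (fun i : ι => Set.finite_Iic n))
    intro y hy
    simp only [Set.mem_pi, Set.mem_univ, Set.mem_Iic, forall_true_left]
    intro i
    calc y i ≤ ∑ j, y j := Finset.single_le_sum (fun j _ => Nat.zero_le _) (Finset.mem_univ i)
      _ = n := sum_fiber_eq hA hy hx0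

/-- The `B_{|t|-1}`-class of `x` in the fiber of `t`. -/
def clOf (A : Matrix κ ι ℤ) [Fintype κ] (t : κ → ℤ) (x : ι → ℕ) : Set (ι → ℕ) :=
  {y | y ∈ fiberOf A t ∧ Accessible (Bmoves A (sampleSize A t - 1)) x y}

lemma mem_clOf_self (hx : x ∈ fiberOf A t) : x ∈ clOf A t x :=
  ⟨hx, Relation.ReflTransGen.refl⟩

lemma clOf_mem (hx : x ∈ fiberOf A t) : clOf A t x ∈ fiberClasses A t :=
  ⟨x, hx, rfl⟩

lemma clOf_subset_fiber : clOf A t x ⊆ fiberOf A t := fun _ h => h.1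

lemma clOf_eq_clOf (h : Accessible (Bmoves A (sampleSize A t - 1)) x y) :
    clOf A t x = clOf A t y := by
  ext u
  exact ⟨fun ⟨hu, ha⟩ => ⟨hu, (acc_symm h).trans ha⟩, fun ⟨hu, ha⟩ => ⟨hu, h.trans ha⟩⟩

lemma class_eq_clOf {C : Set (ι → ℕ)} (hC : C ∈ fiberClasses A t) {u : ι → ℕ} (hu : u ∈ C) :
    C = clOf A t u := by
  obtain ⟨x0, hx0, rfl⟩ := hC
  exact clOf_eq_clOf hu.2

lemma acc_of_same_cl (hx : x ∈ clOf A t y) :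
    Accessible (Bmoves A (sampleSize A t - 1)) y x := hx.2

lemma fiberClasses_eq_image : fiberClasses A t = clOf A t '' fiberOf A t := by
  ext C
  simp only [fiberClasses, Set.mem_setOf_eq, Set.mem_image]
  exact ⟨fun ⟨x, hx, h⟩ => ⟨x, hx, h.symm⟩, fun ⟨x, hx, h⟩ => ⟨x, hx, h.symm⟩⟩

lemma fiberClasses_finite (hA : IsHomogeneousMatrix A) (t : κ → ℤ) :
    (fiberClasses A t).Finite := by
  rw [fiberClasses_eq_image]
  exact (fiber_finite hA t).image _

lemma two_le_ncard_classes (hA : IsHomogeneousMatrix A) (hx : x ∈ fiberOf A t)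
    (hy : y ∈ fiberOf A t) (h : ¬ Accessible (Bmoves A (sampleSize A t - 1)) x y) :
    2 ≤ (fiberClasses A t).ncard := by
  have hne : clOf A t x ≠ clOf A t y := by
    intro he
    exact h (acc_of_same_cl (he ▸ mem_clOf_self hy))
  have h1 : 1 < (fiberClasses A t).ncard := by
    rw [Set.one_lt_ncard_iff (fiberClasses_finite hA t)]
    exact ⟨_, _, clOf_mem hx, clOf_mem hy, hne⟩
  exact h1

lemma plus_sim {n : ℕ} {BB : Set (ι → ℤ)} (hA : IsHomogeneousMatrix A)
    (IH : ∀ m, m < n → ∀ t' : κ → ℤ, sampleSize A t' = m →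
      ∀ x ∈ fiberOf A t', ∀ y ∈ fiberOf A t', Accessible BB x y)
    (ht : sampleSize A t = n) (hx : x ∈ fiberOf A t)
    (hz : IsMove A z) (hdeg : degOf z ≤ n - 1)
    (hy : natToInt y = natToInt x + z) : Accessible BB x y := by
  classical
  have hsum : ∑ i, x i = n := by rw [← ht, sampleSize_eq hA hx]
  have hnegsum : ∑ i, negOf z i = degOf z := (degOf_eq_sum_negOf hA hz).symm
  have hcf : ∀ i, (y i : ℤ) = (x i : ℤ) + z i := fun i => congrFun hy i
  rcases Nat.eq_zero_or_pos n with hn | hn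
  · -- n = 0 : the move is trivial
    have hdz : degOf z = 0 := by omega
    have hz0 : z = 0 := by
      funext i
      have h1 : posOf z i = 0 := by
        have : ∑ i, posOf z i = 0 := hdz
        exact Finset.sum_eq_zero_iff.mp this i (Finset.mem_univ i)
      have h2 : negOf z i = 0 := by
        have : ∑ i, negOf z i = 0 := by omega
        exact Finset.sum_eq_zero_iff.mp this i (Finset.mem_univ i)
      simp only [posOf] at h1
      simp only [negOf] at h2
      simp only [Pi.zero_apply]
      omega
    have : y = x := by
      apply natToInt_inj; rw [hy, hz0, add_zero]
    rw [this]
    exact Relation.ReflTransGen.refl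
  · -- n ≥ 1
    have hneg : ∀ i, negOf z i ≤ x i := by
      intro i
      have h1 := hcf i
      simp only [negOf]
      omega
    have hlt : ∑ i, negOf z i < ∑ i, x i := by omega
    have hex : ∃ i, negOf z i < x i := by
      by_contra hc
      push_neg at hc
      have h2 : ∑ i, x i ≤ ∑ i, negOf z i := Finset.sum_le_sum (fun i _ => hc i)
      omega
    obtain ⟨i, hi⟩ := hex
    set e : ι → ℕ := fun j => if j = i then 1 else 0 with he
    have hesum : ∑ j, e j = 1 := by simp [he]
    have hxi : 1 ≤ x i := by omega
    have hyi : 1 ≤ y i := by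
      have h1 := hcf i
      simp only [negOf] at hi
      omega
    set x' : ι → ℕ := fun j => x j - e j with hx'def
    set y' : ι → ℕ := fun j => y j - e j with hy'def
    have hxe : x' + e = x := by
      funext j
      simp only [Pi.add_apply, hx'def, he]
      by_cases hj : j = i <;> simp [hj] <;> omega
    have hye : y' + e = y := by
      funext j
      simp only [Pi.add_apply, hy'def, he]
      by_cases hj : j = i <;> simp [hj] <;> omega
    set t' : κ → ℤ := t - A.mulVec (natToInt e) with ht'
    have hyfib : y ∈ fiberOf A t := by
      show A.mulVec (natToInt y) = t
      rw [hy, Matrix.mulVec_add, hx, hz, add_zero]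
    have hx'fib : x' ∈ fiberOf A t' := by
      show A.mulVec (natToInt x') = t'
      have : A.mulVec (natToInt x) = A.mulVec (natToInt x') + A.mulVec (natToInt e) := by
        rw [← Matrix.mulVec_add, ← natToInt_add, hxe]
      rw [ht']
      rw [hx] at this
      rw [this]; ring
    have hy'fib : y' ∈ fiberOf A t' := by
      show A.mulVec (natToInt y') = t'
      have : A.mulVec (natToInt y) = A.mulVec (natToInt y') + A.mulVec (natToInt e) := by
        rw [← Matrix.mulVec_add, ← natToInt_add, hye]
      rw [ht']
      rw [hyfib] at this
      rw [this]; ring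
    have hsum' : ∑ j, x' j = n - 1 := by
      have : (∑ j, x' j) + (∑ j, e j) = ∑ j, x j := by
        rw [← Finset.sum_add_distrib]
        exact Finset.sum_congr rfl (fun j _ => congrFun hxe j)
      omega
    have hss : sampleSize A t' = n - 1 := by rw [sampleSize_eq hA hx'fib, hsum']
    have hacc := IH (n - 1) (by omega) t' hss x' hx'fib y' hy'fib
    have := acc_add e hacc
    rwa [hxe, hye] at this

lemma sim_acc {n : ℕ} {BB : Set (ι → ℤ)} (hA : IsHomogeneousMatrix A)
    (IH : ∀ m, m < n → ∀ t' : κ → ℤ, sampleSize A t' = m →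
      ∀ x ∈ fiberOf A t', ∀ y ∈ fiberOf A t', Accessible BB x y)
    (ht : sampleSize A t = n) (hx : x ∈ fiberOf A t)
    (h : Accessible (Bmoves A (n - 1)) x y) : Accessible BB x y := by
  induction h with
  | refl => exact Relation.ReflTransGen.refl
  | @tail b c hxb hstep ih =>
    have hb : b ∈ fiberOf A t :=
      mem_fiber_of_acc (fun z hz => hz.1) hx hxb
    refine ih.trans ?_
    obtain ⟨z, hzB, hc | hc⟩ := hstep
    · exact plus_sim hA IH ht hb hzB.1 hzB.2 hc
    · have hzB' := neg_mem_Bmoves hA hzB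
      exact plus_sim hA IH ht hb hzB'.1 hzB'.2 (by rw [hc, sub_eq_add_neg])

lemma class_subset_fiber {C : Set (ι → ℕ)} (hC : C ∈ fiberClasses A t) :
    C ⊆ fiberOf A t := by
  obtain ⟨x0, hx0, rfl⟩ := hC
  exact fun u hu => hu.1

lemma neg_eq_pos_sub (z : ι → ℤ) : natToInt (negOf z) = natToInt (posOf z) - z := by
  funext i
  simp only [natToInt, negOf, posOf, Pi.sub_apply]
  omega

lemma pos_eq_neg_add (z : ι → ℤ) : natToInt (posOf z) = natToInt (negOf z) + z := by
  funext i
  simp only [natToInt, negOf, posOf, Pi.add_apply]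
  omega

end Aux1

section Main

variable {p d : ℕ}

theorem bigAcc (A : Matrix (Fin d) (Fin p) ℤ) (hA : IsHomogeneousMatrix A)
    (Z : (Fin d → ℤ) → Set (Fin p → ℤ))
    (hZ : ∀ t : Fin d → ℤ, 2 ≤ (fiberClasses A t).ncard →
      Z t ⊆ {z | IsMove A z} ∧
      (∀ z ∈ Z t, ¬ Accessible (Bmoves A (sampleSize A t - 1)) (posOf z) (negOf z)) ∧
      (SimpleGraph.fromRel (fun C₁ C₂ : ↥(fiberClasses A t) =>
          ∃ z ∈ Z t, posOf z ∈ C₁.1 ∧ negOf z ∈ C₂.1)).IsTree) :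
    ∀ (n : ℕ) (t : Fin d → ℤ), sampleSize A t = n →
      ∀ x ∈ fiberOf A t, ∀ y ∈ fiberOf A t,
        Accessible (⋃ t ∈ {t : Fin d → ℤ | 2 ≤ (fiberClasses A t).ncard}, Z t) x y := by
  intro n
  induction n using Nat.strong_induction_on with
  | _ n IH =>
  intro t ht x hx y hy
  set BB := (⋃ t ∈ {t : Fin d → ℤ | 2 ≤ (fiberClasses A t).ncard}, Z t) with hBB
  have hsim : ∀ u ∈ fiberOf A t, ∀ v,
      Accessible (Bmoves A (sampleSize A t - 1)) u v → Accessible BB u v := by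
    intro u hu v h
    rw [ht] at h
    exact sim_acc hA (fun m hm => IH m hm) ht hu h
  by_cases hacc : Accessible (Bmoves A (sampleSize A t - 1)) x y
  · exact hsim x hx y hacc
  · have h2 : 2 ≤ (fiberClasses A t).ncard := two_le_ncard_classes hA hx hy hacc
    obtain ⟨hsub, hdiff, htree⟩ := hZ t h2
    set G := SimpleGraph.fromRel (fun C₁ C₂ : ↥(fiberClasses A t) =>
      ∃ z ∈ Z t, posOf z ∈ C₁.1 ∧ negOf z ∈ C₂.1) with hG
    have key : ∀ (C D : ↥(fiberClasses A t)) (w : G.Walk C D),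
        ∀ u ∈ C.1, ∀ v ∈ D.1, Accessible BB u v := by
      intro C D w
      induction w with
      | @nil E =>
        intro u hu v hv
        have hC := class_eq_clOf E.2 hu
        rw [hC] at hv
        exact hsim u (class_subset_fiber E.2 hu) v hv.2
      | @cons C b D hadj q ih =>
        intro u hu v hv
        rw [hG, SimpleGraph.fromRel_adj] at hadj
        obtain ⟨hne, ⟨z, hzZ, hzp, hzn⟩ | ⟨z, hzZ, hzp, hzn⟩⟩ := hadj
        · -- posOf z ∈ C.1, negOf z ∈ b.1
          have h1 : Accessible BB u (posOf z) := by
            have hC := class_eq_clOf C.2 hu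
            rw [hC] at hzp
            exact hsim u (class_subset_fiber C.2 hu) _ hzp.2
          have hzBB : z ∈ BB := Set.mem_biUnion h2 hzZ
          have hstep : MStep BB (posOf z) (negOf z) :=
            ⟨z, hzBB, Or.inr (neg_eq_pos_sub z)⟩
          exact (h1.tail hstep).trans (ih _ hzn _ hv)
        · -- posOf z ∈ b.1, negOf z ∈ C.1
          have h1 : Accessible BB u (negOf z) := by
            have hC := class_eq_clOf C.2 hu
            rw [hC] at hzn
            exact hsim u (class_subset_fiber C.2 hu) _ hzn.2
          have hzBB : z ∈ BB := Set.mem_biUnion h2 hzZ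
          have hstep : MStep BB (negOf z) (posOf z) :=
            ⟨z, hzBB, Or.inl (pos_eq_neg_add z)⟩
          exact (h1.tail hstep).trans (ih _ hzp _ hv)
    obtain ⟨w⟩ := htree.isConnected.preconnected
      ⟨clOf A t x, clOf_mem hx⟩ ⟨clOf A t y, clOf_mem hy⟩
    exact key _ _ w x (mem_clOf_self hx) y (mem_clOf_self hy)

end Main

section Aux2

variable {ι κ : Type*} [Fintype ι] [Fintype κ]
variable {A : Matrix κ ι ℤ} {B : Set (ι → ℤ)} {t : κ → ℤ} {x y : ι → ℕ} {z : ι → ℤ}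

lemma collapse (hA : IsHomogeneousMatrix A) {t t' : κ → ℤ} {x y x' y' : ι → ℕ}
    (hx : x ∈ fiberOf A t) (hy : y ∈ fiberOf A t) (hxy : x ≠ y)
    (hx' : x' ∈ fiberOf A t') (hy' : y' ∈ fiberOf A t')
    (hxx : ∀ i, x i ≤ x' i) (hyy : ∀ i, y i ≤ y' i) (htt : t ≠ t') :
    Accessible (Bmoves A (sampleSize A t' - 1)) x' y' := by
  set n0 := ∑ i, x i with hn0
  set n' := ∑ i, x' i with hn'
  have hy0 : ∑ i, y i = n0 := sum_fiber_eq hA hy hx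
  have hy'n : ∑ i, y' i = n' := sum_fiber_eq hA hy' hx'
  have hn0pos : 1 ≤ n0 := by
    by_contra h
    push_neg at h
    have h0 : n0 = 0 := by omega
    apply hxy
    funext i
    have hx0 : ∑ i, x i = 0 := by omega
    have hxi : x i = 0 := Finset.sum_eq_zero_iff.mp hx0 i (Finset.mem_univ i)
    have hyi : y i = 0 := Finset.sum_eq_zero_iff.mp (by omega : ∑ i, y i = 0) i (Finset.mem_univ i)
    rw [hxi, hyi]
  have hlt : n0 < n' := by
    have hle : n0 ≤ n' := Finset.sum_le_sum (fun i _ => hxx i)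
    rcases lt_or_eq_of_le hle with h | h
    · exact h
    · exfalso
      have hxx' : x = x' := by
        funext i
        exact (Finset.sum_eq_sum_iff_of_le (fun i _ => hxx i)).mp h i (Finset.mem_univ i)
      exact htt (hx ▸ hxx' ▸ hx')
  have hss : sampleSize A t' = n' := sampleSize_eq hA hx'
  set z1 : ι → ℤ := natToInt y - natToInt x with hz1def
  have hz1 : z1 ∈ Bmoves A (sampleSize A t' - 1) := by
    constructor
    · show A.mulVec z1 = 0
      rw [hz1def, Matrix.mulVec_sub, hx, hy, sub_self]
    · have hdeg : degOf z1 ≤ n0 := by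
        rw [← hy0]
        apply Finset.sum_le_sum
        intro i _
        simp only [posOf, hz1def, Pi.sub_apply, natToInt]
        omega
      omega
  set mid : ι → ℕ := fun i => x' i - x i + y i with hmid_def
  have hmid : natToInt mid = natToInt x' + z1 := by
    funext i
    simp only [natToInt, hmid_def, hz1def, Pi.add_apply, Pi.sub_apply]
    have := hxx i
    push_cast
    omega
  have hmidfib : A.mulVec (natToInt mid) = t' := by
    rw [hmid, Matrix.mulVec_add, hx', hz1def, Matrix.mulVec_sub, hx, hy, sub_self, add_zero]
  set z2 : ι → ℤ := natToInt y' - natToInt mid with hz2def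
  have hz2 : z2 ∈ Bmoves A (sampleSize A t' - 1) := by
    constructor
    · show A.mulVec z2 = 0
      rw [hz2def, Matrix.mulVec_sub, hy', hmidfib, sub_self]
    · have hdeg : degOf z2 ≤ ∑ i, (y' i - y i) := by
        apply Finset.sum_le_sum
        intro i _
        simp only [posOf, hz2def, Pi.sub_apply, natToInt, hmid_def]
        have := hxx i
        have := hyy i
        omega
      have hsub : ∑ i, (y' i - y i) = n' - n0 := by
        rw [Finset.sum_tsub_distrib Finset.univ (fun i _ => hyy i), hy0, hy'n]
      omega
  have hstep1 : MStep (Bmoves A (sampleSize A t' - 1)) x' mid := ⟨z1, hz1, Or.inl hmid⟩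
  have hstep2 : MStep (Bmoves A (sampleSize A t' - 1)) mid y' :=
    ⟨z2, hz2, Or.inl (by rw [hz2def]; ring)⟩
  exact (Relation.ReflTransGen.single hstep1).tail hstep2

lemma exists_bad_pair (hA : IsHomogeneousMatrix A) (h2 : 2 ≤ (fiberClasses A t).ncard) :
    ∃ xy : (ι → ℕ) × (ι → ℕ), xy.1 ∈ fiberOf A t ∧ xy.2 ∈ fiberOf A t ∧
      ¬ Accessible (Bmoves A (sampleSize A t - 1)) xy.1 xy.2 := by
  obtain ⟨C, D, hC, hD, hCD⟩ := (Set.one_lt_ncard_iff (fiberClasses_finite hA t)).mp h2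
  obtain ⟨x1, hx1, hCe⟩ := hC
  obtain ⟨x2, hx2, hDe⟩ := hD
  refine ⟨(x1, x2), hx1, hx2, fun hacc => hCD ?_⟩
  rw [hCe, hDe]
  exact clOf_eq_clOf hacc

lemma S_finite (hA : IsHomogeneousMatrix A) :
    {t : κ → ℤ | 2 ≤ (fiberClasses A t).ncard}.Finite := by
  set S := {t : κ → ℤ | 2 ≤ (fiberClasses A t).ncard} with hS
  by_contra hfin
  replace hfin : S.Infinite := hfin
  have hpair : ∀ s : ↥S, ∃ xy : (ι → ℕ) × (ι → ℕ),
      xy.1 ∈ fiberOf A s.1 ∧ xy.2 ∈ fiberOf A s.1 ∧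
      ¬ Accessible (Bmoves A (sampleSize A s.1 - 1)) xy.1 xy.2 :=
    fun s => exists_bad_pair hA s.2
  choose F h1 h2 h3 using hpair
  set e := hfin.natEmbedding with he
  have hpi : (Set.univ : Set (ι → ℕ)).IsPWO := by
    have h : ∀ i : ι, IsWellOrder ((fun _ : ι => ℕ) i) (· < ·) := fun _ => inferInstance
    exact Set.isPWO_of_wellQuasiOrderedLE _
  have hPWO : (Set.univ : Set ((ι → ℕ) × (ι → ℕ))).IsPWO := by
    rw [← Set.univ_prod_univ]
    exact hpi.prod hpi
  obtain ⟨m, k, hmk, hle⟩ : ∃ m k, m < k ∧ F (e m) ≤ F (e k) :=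
    hPWO (fun j => ⟨F (e j), Set.mem_univ _⟩)
  have htt : (e m).1 ≠ (e k).1 := by
    intro h
    exact absurd (Subtype.ext h : e m = e k) (by simpa using e.injective.ne hmk.ne)
  have hxy : (F (e m)).1 ≠ (F (e m)).2 := by
    intro h
    exact h3 (e m) (h ▸ Relation.ReflTransGen.refl)
  have hbad := collapse hA (h1 (e m)) (h2 (e m)) hxy (h1 (e k)) (h2 (e k))
    (fun i => hle.1 i) (fun i => hle.2 i) htt
  exact h3 (e k) hbad

end Aux2

section Aux3

variable {ι κ : Type*} [Fintype ι] [Fintype κ]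
variable {A : Matrix κ ι ℤ} {t : κ → ℤ}

lemma step_classify (hA : IsHomogeneousMatrix A) {t t' : κ → ℤ} {w v : ι → ℕ} {z' : ι → ℤ}
    (hmove : IsMove A z') (hposf : A.mulVec (natToInt (posOf z')) = t')
    (hnegf : A.mulVec (natToInt (negOf z')) = t')
    (hw : w ∈ fiberOf A t)
    (hstep : natToInt v = natToInt w + z' ∨ natToInt v = natToInt w - z')
    (hbig : ¬ degOf z' ≤ sampleSize A t - 1) :
    t' = t ∧ ((w = negOf z' ∧ v = posOf z') ∨ (w = posOf z' ∧ v = negOf z')) := by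
  have hn : sampleSize A t = ∑ i, w i := sampleSize_eq hA hw
  have hnn : ∑ i, negOf z' i = degOf z' := (degOf_eq_sum_negOf hA hmove).symm
  rcases hstep with hpm | hpm
  · have hcf : ∀ i, (v i : ℤ) = (w i : ℤ) + z' i := fun i => congrFun hpm i
    have hle : ∀ i, negOf z' i ≤ w i := by
      intro i
      have := hcf i
      simp only [negOf]
      omega
    have hsle : ∑ i, negOf z' i ≤ ∑ i, w i := Finset.sum_le_sum (fun i _ => hle i)
    have hsum : ∑ i, negOf z' i = ∑ i, w i := by omega
    have hweq : w = negOf z' := by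
      funext i
      exact ((Finset.sum_eq_sum_iff_of_le (fun i _ => hle i)).mp hsum i
        (Finset.mem_univ i)).symm
    have hveq : v = posOf z' := by
      funext i
      have h1 := hcf i
      have h2 : w i = negOf z' i := congrFun hweq i
      simp only [negOf] at h2
      simp only [posOf]
      omega
    refine ⟨?_, Or.inl ⟨hweq, hveq⟩⟩
    rw [← hnegf, ← hw, hweq]
  · have hcf : ∀ i, (v i : ℤ) = (w i : ℤ) - z' i := fun i => congrFun hpm i
    have hle : ∀ i, posOf z' i ≤ w i := by
      intro i
      have := hcf i
      simp only [posOf]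
      omega
    have hsle : ∑ i, posOf z' i ≤ ∑ i, w i := Finset.sum_le_sum (fun i _ => hle i)
    have hdeg : ∑ i, posOf z' i = degOf z' := rfl
    have hsum : ∑ i, posOf z' i = ∑ i, w i := by omega
    have hweq : w = posOf z' := by
      funext i
      exact ((Finset.sum_eq_sum_iff_of_le (fun i _ => hle i)).mp hsum i
        (Finset.mem_univ i)).symm
    have hveq : v = negOf z' := by
      funext i
      have h1 := hcf i
      have h2 : w i = posOf z' i := congrFun hweq i
      simp only [posOf] at h2
      simp only [negOf]
      omega
    refine ⟨?_, Or.inr ⟨hweq, hveq⟩⟩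
    rw [← hposf, ← hw, hweq]

end Aux3



/-- `B_t`: the set of moves `z` with `A z⁺ = A z⁻ = t`. -/
def movesOfFiber {p d : ℕ} (A : Matrix (Fin d) (Fin p) ℤ) (t : Fin d → ℤ) :
    Set (Fin p → ℤ) :=
  {z | IsMove A z ∧ A.mulVec (natToInt (posOf z)) = t ∧ A.mulVec (natToInt (negOf z)) = t}

/-- choosing, for each `t` with at least two `B_{|t|-1}`-equivalence
classes, `K_t - 1` moves of `B_t` connecting different classes so that the induced
graph on the classes is a tree, the union of all chosen moves is a minimal Markov
basis. -/
theorem chosen_tree_moves_form_minimal_MarkovBasis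
    {p d : ℕ} (hp : 0 < p) (hd : 0 < d)
    (A : Matrix (Fin d) (Fin p) ℤ) (hA : IsHomogeneousMatrix A)
    (Z : (Fin d → ℤ) → Set (Fin p → ℤ))
    (hZ : ∀ t : Fin d → ℤ, 2 ≤ (fiberClasses A t).ncard →
      Z t ⊆ movesOfFiber A t ∧
      (Z t).ncard = (fiberClasses A t).ncard - 1 ∧
      (∀ z ∈ Z t, ¬ Accessible (Bmoves A (sampleSize A t - 1)) (posOf z) (negOf z)) ∧
      (SimpleGraph.fromRel (fun C₁ C₂ : ↥(fiberClasses A t) =>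
          ∃ z ∈ Z t, posOf z ∈ C₁.1 ∧ negOf z ∈ C₂.1)).IsTree) :
    IsMinimalMarkovBasis A
      (⋃ t ∈ {t : Fin d → ℤ | 2 ≤ (fiberClasses A t).ncard}, Z t) := by
  classical
  set S := {t : Fin d → ℤ | 2 ≤ (fiberClasses A t).ncard} with hS
  set BB := ⋃ t ∈ S, Z t with hBBdef
  have hBBmoves : ∀ z ∈ BB, IsMove A z := by
    intro z hz
    obtain ⟨t, htS, hzZ⟩ := Set.mem_iUnion₂.mp hz
    exact ((hZ t htS).1 hzZ).1
  have hMB : IsMarkovBasis A BB := by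
    refine ⟨?_, hBBmoves, ?_⟩
    · -- finiteness
      apply Set.Finite.biUnion (S_finite hA)
      intro t htS
      by_contra hinf
      replace hinf : (Z t).Infinite := hinf
      have h0 := hinf.ncard
      have hcard := (hZ t htS).2.1
      have h2 : 2 ≤ (fiberClasses A t).ncard := htS
      omega
    · intro t x hx y hy
      exact bigAcc A hA Z
        (fun t' ht' => ⟨fun z hz => ((hZ t' ht').1 hz).1, (hZ t' ht').2.2.1, (hZ t' ht').2.2.2⟩)
        (sampleSize A t) t rfl x hx y hy
  refine ⟨hMB, ?_⟩
  intro B' hB' hMB'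
  obtain ⟨z₀, hz₀BB, hz₀B'⟩ := Set.exists_of_ssubset hB'
  obtain ⟨t₀, ht₀S, hz₀Z⟩ := Set.mem_iUnion₂.mp hz₀BB
  obtain ⟨hsub, hcard, hdiff, htree⟩ := hZ t₀ ht₀S
  have hB'moves : ∀ z ∈ B', IsMove A z := fun z hz => hBBmoves z (hB'.subset hz)
  have hpos0 : posOf z₀ ∈ fiberOf A t₀ := (hsub hz₀Z).2.1
  have hneg0 : negOf z₀ ∈ fiberOf A t₀ := (hsub hz₀Z).2.2
  -- class/graph setup
  set G := SimpleGraph.fromRel (fun C₁ C₂ : ↥(fiberClasses A t₀) =>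
    ∃ z ∈ Z t₀, posOf z ∈ C₁.1 ∧ negOf z ∈ C₂.1) with hG
  have hposf : ∀ z' ∈ Z t₀, posOf z' ∈ fiberOf A t₀ := fun z' hz' => (hsub hz').2.1
  have hnegf : ∀ z' ∈ Z t₀, negOf z' ∈ fiberOf A t₀ := fun z' hz' => (hsub hz').2.2
  have hdiffCl : ∀ z' ∈ Z t₀, clOf A t₀ (posOf z') ≠ clOf A t₀ (negOf z') := by
    intro z' hz' he
    exact hdiff z' hz' (acc_of_same_cl (he ▸ mem_clOf_self (hnegf z' hz')))
  -- the edge map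
  haveI : Fintype ↥(fiberClasses A t₀) := (fiberClasses_finite hA t₀).fintype
  haveI : Fintype ↥(Z t₀) := by
    have : (Z t₀).Finite := by
      by_contra hinf
      replace hinf : (Z t₀).Infinite := hinf
      have h0 := hinf.ncard
      have h2 : 2 ≤ (fiberClasses A t₀).ncard := ht₀S
      omega
    exact this.fintype
  haveI : Fintype ↥G.edgeSet := Fintype.ofFinite _
  have hadjZ : ∀ z' (hz' : z' ∈ Z t₀),
      G.Adj ⟨clOf A t₀ (posOf z'), clOf_mem (hposf z' hz')⟩
            ⟨clOf A t₀ (negOf z'), clOf_mem (hnegf z' hz')⟩ := by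
    intro z' hz'
    rw [hG, SimpleGraph.fromRel_adj]
    refine ⟨fun h => hdiffCl z' hz' (congrArg Subtype.val h), Or.inl
      ⟨z', hz', mem_clOf_self (hposf z' hz'), mem_clOf_self (hnegf z' hz')⟩⟩
  set F : ↥(Z t₀) → ↥G.edgeSet := fun z =>
    ⟨s(⟨clOf A t₀ (posOf z.1), clOf_mem (hposf z.1 z.2)⟩,
       ⟨clOf A t₀ (negOf z.1), clOf_mem (hnegf z.1 z.2)⟩),
      (SimpleGraph.mem_edgeSet G).mpr (hadjZ z.1 z.2)⟩ with hF
  have hFsurj : Function.Surjective F := by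
    rintro ⟨e, he⟩
    induction e using Sym2.ind with
    | _ C D =>
      rw [SimpleGraph.mem_edgeSet, hG, SimpleGraph.fromRel_adj] at he
      obtain ⟨hne, ⟨z, hz, hp, hn⟩ | ⟨z, hz, hp, hn⟩⟩ := he
      · refine ⟨⟨z, hz⟩, Subtype.ext ?_⟩
        have h1 : (⟨clOf A t₀ (posOf z), clOf_mem (hposf z hz)⟩ :
            ↥(fiberClasses A t₀)) = C := Subtype.ext (class_eq_clOf C.2 hp).symm
        have h2 : (⟨clOf A t₀ (negOf z), clOf_mem (hnegf z hz)⟩ :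
            ↥(fiberClasses A t₀)) = D := Subtype.ext (class_eq_clOf D.2 hn).symm
        show s(_, _) = s(C, D)
        rw [h1, h2]
      · refine ⟨⟨z, hz⟩, Subtype.ext ?_⟩
        have h1 : (⟨clOf A t₀ (posOf z), clOf_mem (hposf z hz)⟩ :
            ↥(fiberClasses A t₀)) = D := Subtype.ext (class_eq_clOf D.2 hp).symm
        have h2 : (⟨clOf A t₀ (negOf z), clOf_mem (hnegf z hz)⟩ :
            ↥(fiberClasses A t₀)) = C := Subtype.ext (class_eq_clOf C.2 hn).symm
        show s(_, _) = s(C, D)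
        rw [h1, h2, Sym2.eq_swap]
  have hFinj : Function.Injective F := by
    have hc1 : Fintype.card ↥(Z t₀) = (Z t₀).ncard := by
      rw [← Nat.card_coe_set_eq, Nat.card_eq_fintype_card]
    have hc2 : Fintype.card ↥G.edgeSet = (fiberClasses A t₀).ncard - 1 := by
      have he1 : G.edgeFinset.card + 1 = Fintype.card ↥(fiberClasses A t₀) :=
        htree.card_edgeFinset
      have he2 : G.edgeFinset.card = Fintype.card ↥G.edgeSet := Set.toFinset_card _
      have he3 : Fintype.card ↥(fiberClasses A t₀) = (fiberClasses A t₀).ncard := by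
        rw [← Nat.card_coe_set_eq, Nat.card_eq_fintype_card]
      omega
    have hcards : Fintype.card ↥(Z t₀) = Fintype.card ↥G.edgeSet := by
      rw [hc1, hc2, hcard]
    exact ((Fintype.bijective_iff_surjective_and_card F).mpr ⟨hFsurj, hcards⟩).1
  -- the bridge
  set Cp : ↥(fiberClasses A t₀) := ⟨clOf A t₀ (posOf z₀), clOf_mem hpos0⟩ with hCp
  set Cm : ↥(fiberClasses A t₀) := ⟨clOf A t₀ (negOf z₀), clOf_mem hneg0⟩ with hCm
  have hbridge : ¬ (G \ SimpleGraph.fromEdgeSet {s(Cp, Cm)}).Reachable Cp Cm := by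
    have hb := (SimpleGraph.isAcyclic_iff_forall_edge_isBridge.mp htree.2)
      ((SimpleGraph.mem_edgeSet G).mpr (hadjZ z₀ hz₀Z))
    exact SimpleGraph.isBridge_iff.mp hb
  set G' := G \ SimpleGraph.fromEdgeSet {s(Cp, Cm)} with hG'
  -- the key claim
  have claim : ∀ u v : Fin p → ℕ, Accessible B' u v → ∀ (hu : u ∈ fiberOf A t₀),
      ∀ (hv : v ∈ fiberOf A t₀),
      G'.Reachable ⟨clOf A t₀ u, clOf_mem hu⟩ ⟨clOf A t₀ v, clOf_mem hv⟩ := by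
    intro u v hacc
    induction hacc with
    | refl =>
      intro hu hv
      exact SimpleGraph.Reachable.refl _
    | @tail b c hab hstep ih =>
      intro hu hv
      have hb : b ∈ fiberOf A t₀ := mem_fiber_of_acc hB'moves hu hab
      refine (ih hu hb).trans ?_
      obtain ⟨z', hz'B', hpm⟩ := hstep
      have hz'BB : z' ∈ BB := hB'.subset hz'B'
      obtain ⟨t', ht'S, hz'Z⟩ := Set.mem_iUnion₂.mp hz'BB
      by_cases hdeg : degOf z' ≤ sampleSize A t₀ - 1
      · -- small move : stays in the same class
        have hacc1 : Accessible (Bmoves A (sampleSize A t₀ - 1)) b c :=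
          Relation.ReflTransGen.single ⟨z', ⟨((hZ t' ht'S).1 hz'Z).1, hdeg⟩, hpm⟩
        have hcl : clOf A t₀ b = clOf A t₀ c := clOf_eq_clOf hacc1
        have hveq : (⟨clOf A t₀ b, clOf_mem hb⟩ : ↥(fiberClasses A t₀)) =
            ⟨clOf A t₀ c, clOf_mem hv⟩ := Subtype.ext hcl
        rw [hveq]
      · -- big move : an edge of the tree, distinct from the removed one
        obtain ⟨hmf1, hmf2, hmf3⟩ := (hZ t' ht'S).1 hz'Z
        obtain ⟨heq, hcase⟩ := step_classify hA hmf1 hmf2 hmf3 hb hpm hdeg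
        rw [heq] at hz'Z
        have hz0ne : (⟨z', hz'Z⟩ : ↥(Z t₀)) ≠ ⟨z₀, hz₀Z⟩ := by
          intro h
          have hval : z' = z₀ := congrArg Subtype.val h
          exact hz₀B' (hval ▸ hz'B')
        have hFne : (F ⟨z', hz'Z⟩).1 ≠ (F ⟨z₀, hz₀Z⟩).1 :=
          fun h => hz0ne (hFinj (Subtype.ext h))
        have hadj' : G'.Adj ⟨clOf A t₀ (posOf z'), clOf_mem (hposf z' hz'Z)⟩
            ⟨clOf A t₀ (negOf z'), clOf_mem (hnegf z' hz'Z)⟩ := by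
          rw [hG', SimpleGraph.sdiff_adj]
          refine ⟨hadjZ z' hz'Z, ?_⟩
          rw [SimpleGraph.fromEdgeSet_adj]
          rintro ⟨hmem, -⟩
          apply hFne
          rw [Set.mem_singleton_iff] at hmem
          exact hmem
        rcases hcase with ⟨hbe, hce⟩ | ⟨hbe, hce⟩
        · -- b = negOf z', c = posOf z'
          subst hbe; subst hce
          exact (hadj'.symm).reachable
        · subst hbe; subst hce
          exact hadj'.reachable
  have hacc0 : Accessible B' (posOf z₀) (negOf z₀) := hMB'.2.2 t₀ (posOf z₀) hpos0 (negOf z₀) hneg0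
  exact hbridge (claim (posOf z₀) (negOf z₀) hacc0 hpos0 hneg0)
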